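/- arXiv:1805.04677 — 3 statements merged into one kernel-verified Lean document; each statement's English description precedes it below -/
import Mathlib

section
/- There exist a real number α > 0 and a natural number k₀ such that for every a ∈ ℝ² and every integer k ≥ k₀, N_k(Σ₃, a) ≤ α·k², where Σ₃ = {A₂, A₃}. -/
open Matrix Set

noncomputable section

/-- `XSeq S a k` is the set of all vectors `T_{k-1} ⋯ T_0 · a` with each `T_j ∈ S`
(and `XSeq S a 0 = {a}`). -/
def XSeq {n : ℕ} (S : Set (Matrix (Fin n) (Fin n) ℝ)) (a : Fin n → ℝ) : ℕ → Set (Fin n → ℝ)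
  | 0 => {a}
  | k + 1 => ⋃ A ∈ S, A.mulVec '' XSeq S a k

/-- `PHull S a k` is the convex hull of `XSeq S a k`. -/
def PHull {n : ℕ} (S : Set (Matrix (Fin n) (Fin n) ℝ)) (a : Fin n → ℝ) (k : ℕ) :
    Set (Fin n → ℝ) :=
  convexHull ℝ (XSeq S a k)

/-- `EPts S a k` is the set of extreme points of `PHull S a k`. -/
def EPts {n : ℕ} (S : Set (Matrix (Fin n) (Fin n) ℝ)) (a : Fin n → ℝ) (k : ℕ) :
    Set (Fin n → ℝ) :=
  Set.extremePoints ℝ (PHull S a k)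

/-- `NExt S a k` is the number of extreme points of `PHull S a k`. -/
def NExt {n : ℕ} (S : Set (Matrix (Fin n) (Fin n) ℝ)) (a : Fin n → ℝ) (k : ℕ) : ℕ :=
  (EPts S a k).ncard

def M1 : Matrix (Fin 2) (Fin 2) ℝ := !![0, 1; 1, 0]
def M2 : Matrix (Fin 2) (Fin 2) ℝ := !![1, 1; 0, 1]
def M3 : Matrix (Fin 2) (Fin 2) ℝ := !![1, 0; 1, 1]
def M4 : Matrix (Fin 2) (Fin 2) ℝ := !![1, 1; 1, 0]
def M5 : Matrix (Fin 2) (Fin 2) ℝ := !![0, 1; 1, 1]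

namespace S17

def mat (b : Bool) : Matrix (Fin 2) (Fin 2) ℝ := if b then M3 else M2

def seg (w : ℕ → Bool) (p : ℕ) : ℕ → Matrix (Fin 2) (Fin 2) ℝ
  | 0 => 1
  | n+1 => mat (w (p+n)) * seg w p n

lemma seg_add (w : ℕ → Bool) (p m : ℕ) : ∀ n, seg w p (m + n) = seg w (p + m) n * seg w p m := by
  intro n
  induction n with
  | zero => simp [seg]
  | succ n ih =>
    show mat (w (p + (m+n))) * seg w p (m+n) = _
    rw [ih, seg, mul_assoc, ← Nat.add_assoc]

lemma seg_congr {w w' : ℕ → Bool} {p : ℕ} : ∀ {n}, (∀ i, p ≤ i → i < p + n → w i = w' i) →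
    seg w p n = seg w' p n := by
  intro n
  induction n with
  | zero => intro _; rfl
  | succ n ih =>
    intro h
    rw [seg, seg, h _ (by omega) (by omega), ih fun i h1 h2 => h i h1 (by omega)]

lemma seg_const {w : ℕ → Bool} {p : ℕ} {c : Bool} : ∀ {n}, (∀ i, p ≤ i → i < p + n → w i = c) →
    seg w p n = (mat c) ^ n := by
  intro n
  induction n with
  | zero => intro _; rfl
  | succ n ih =>
    intro h
    rw [seg, h _ (by omega) (by omega), ih fun i h1 h2 => h i h1 (by omega), pow_succ']

lemma M2_pow (m : ℕ) : M2 ^ m = !![1, (m:ℝ); 0, 1] := by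
  induction m with
  | zero => simp [Matrix.one_fin_two]
  | succ n ih =>
    rw [pow_succ, ih, M2]
    ext i j
    fin_cases i <;> fin_cases j <;> simp [Matrix.mul_apply, Fin.sum_univ_two] <;> push_cast <;> ring

lemma M3_pow (m : ℕ) : M3 ^ m = !![1, 0; (m:ℝ), 1] := by
  induction m with
  | zero => simp [Matrix.one_fin_two]
  | succ n ih =>
    rw [pow_succ, ih, M3]
    ext i j
    fin_cases i <;> fin_cases j <;> simp [Matrix.mul_apply, Fin.sum_univ_two] <;> push_cast <;> ring

lemma idF (l : ℕ) : M2 * M3^(l+2) * M2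
    = (1/2 : ℝ) • (M2^(l+2) * M3 * M2) + (1/6 : ℝ) • (M2*M3*M2*M3^(l+1)) + (1/3 : ℝ) • (M3^(l+1)*M2*M3*M2) := by
  rw [M2_pow, M3_pow, M3_pow]
  ext i j
  fin_cases i <;> fin_cases j <;>
    simp [M2, M3, Matrix.mul_apply, Fin.sum_univ_two] <;> push_cast <;> ring

lemma idT (l : ℕ) : M3 * M2^(l+2) * M3
    = (1/2 : ℝ) • (M3*M2*M3^(l+2)) + (1/6 : ℝ) • (M2^(l+1)*M3*M2*M3) + (1/3 : ℝ) • (M3*M2*M3*M2^(l+1)) := by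
  rw [M2_pow, M2_pow, M3_pow]
  ext i j
  fin_cases i <;> fin_cases j <;>
    simp [M2, M3, Matrix.mul_apply, Fin.sum_univ_two] <;> push_cast <;> ring

lemma mat_mem : ∀ c, mat c ∈ ({M2, M3} : Set (Matrix (Fin 2) (Fin 2) ℝ)) := by
  intro c; cases c <;> simp [mat]

lemma seg_four (w : ℕ → Bool) (p n₁ n₂ n₃ n₄ : ℕ) (c₁ c₂ c₃ c₄ : Bool)
    (h₁ : ∀ i, p ≤ i → i < p + n₁ → w i = c₁)
    (h₂ : ∀ i, p + n₁ ≤ i → i < p + n₁ + n₂ → w i = c₂)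
    (h₃ : ∀ i, p + n₁ + n₂ ≤ i → i < p + n₁ + n₂ + n₃ → w i = c₃)
    (h₄ : ∀ i, p + n₁ + n₂ + n₃ ≤ i → i < p + n₁ + n₂ + n₃ + n₄ → w i = c₄) :
    seg w p (n₁ + n₂ + n₃ + n₄)
      = (mat c₄)^n₄ * (mat c₃)^n₃ * (mat c₂)^n₂ * (mat c₁)^n₁ := by
  have e4 : seg w p (n₁+n₂+n₃+n₄) = seg w (p+(n₁+n₂+n₃)) n₄ * seg w p (n₁+n₂+n₃) :=
    seg_add w p _ _
  have e3 : seg w p (n₁+n₂+n₃) = seg w (p+(n₁+n₂)) n₃ * seg w p (n₁+n₂) := seg_add w p _ _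
  have e2 : seg w p (n₁+n₂) = seg w (p+n₁) n₂ * seg w p n₁ := seg_add w p _ _
  rw [e4, e3, e2, seg_const (c:=c₁) h₁,
    seg_const (p := p+n₁) (n := n₂) (c:=c₂) (fun i hi hi' => h₂ i (by omega) (by omega)),
    seg_const (p := p+(n₁+n₂)) (n := n₃) (c:=c₃) (fun i hi hi' => h₃ i (by omega) (by omega)),
    seg_const (p := p+(n₁+n₂+n₃)) (n := n₄) (c:=c₄) (fun i hi hi' => h₄ i (by omega) (by omega))]
  simp only [mul_assoc]

lemma xseq_eq (a : Fin 2 → ℝ) : ∀ k,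
    XSeq {M2, M3} a k = {x | ∃ w : ℕ → Bool, x = (seg w 0 k).mulVec a} := by
  intro k
  induction k with
  | zero =>
    ext x
    simp only [XSeq, mem_singleton_iff, mem_setOf_eq]
    constructor
    · rintro rfl; exact ⟨fun _ => false, by simp [seg]⟩
    · rintro ⟨w, rfl⟩; simp [seg]
  | succ k ih =>
    ext x
    simp only [XSeq, mem_iUnion, mem_image, mem_setOf_eq]
    constructor
    · rintro ⟨A, hA, y, hy, rfl⟩
      rw [ih] at hy
      obtain ⟨w, rfl⟩ := hy
      obtain ⟨c, rfl⟩ : ∃ c, mat c = A := by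
        rcases hA with h | h
        · exact ⟨false, by simp [mat, h]⟩
        · exact ⟨true, by simp [mat]; rw [← h]⟩
      refine ⟨fun i => if i = k then c else w i, ?_⟩
      have hsg : seg (fun i => if i = k then c else w i) 0 (k+1) = mat c * seg w 0 k := by
        rw [seg, Nat.zero_add]
        simp only [if_pos rfl]
        congr 1
        exact seg_congr (w := fun i => if i = k then c else w i) (w' := w)
          fun i h1 h2 => by simp [show i ≠ k by omega]
      rw [hsg, ← mulVec_mulVec]
    · rintro ⟨w, rfl⟩
      refine ⟨mat (w k), mat_mem _, (seg w 0 k).mulVec a, by rw [ih]; exact ⟨w, rfl⟩, ?_⟩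
      have hsg : seg w 0 (k+1) = mat (w k) * seg w 0 k := by rw [seg, Nat.zero_add]
      rw [hsg, ← mulVec_mulVec]

def mu (w : ℕ → Bool) : ℕ → ℕ
  | 0 => 0
  | k+1 => (if w k then 2^k else 0) + mu w k

lemma mu_lt (w : ℕ → Bool) : ∀ k, mu w k < 2^k := by
  intro k
  induction k with
  | zero => simp [mu]
  | succ k ih =>
    rw [mu, pow_succ]
    split <;> omega

lemma mu_shift (w w' : ℕ → Bool) (N : ℕ) (hh : ∀ i, N < i → w' i = w i) :
    ∀ j, mu w' (N + 1 + j) + mu w (N + 1) = mu w (N + 1 + j) + mu w' (N + 1) := by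
  intro j
  induction j with
  | zero => ring
  | succ j ih =>
    have ew : w' (N+1+j) = w (N+1+j) := hh _ (by omega)
    have l1 : mu w' (N+1+j+1) = (if w (N+1+j) then 2^(N+1+j) else 0) + mu w' (N+1+j) := by
      rw [mu, ew]
    have l2 : mu w (N+1+j+1) = (if w (N+1+j) then 2^(N+1+j) else 0) + mu w (N+1+j) := rfl
    have e1 : N + 1 + (j + 1) = (N + 1 + j) + 1 := by ring
    rw [e1, l1, l2]
    omega

lemma mu_lt_of {w w' : ℕ → Bool} {N k : ℕ} (hN : N < k) (hh : ∀ i, N < i → w' i = w i)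
    (hw : w N = true) (hw' : w' N = false) : mu w' k < mu w k := by
  obtain ⟨j, rfl⟩ : ∃ j, k = N + 1 + j := ⟨k - (N+1), by omega⟩
  have h1 := mu_shift w w' N hh j
  have h2 : mu w (N+1) = 2^N + mu w N := by rw [mu, if_pos hw]
  have h3 : mu w' (N+1) = mu w' N := by rw [mu, hw']; simp
  have h4 := mu_lt w' N
  omega

lemma extreme_triple {s : Set (Fin 2 → ℝ)} (hs : Convex ℝ s) {x p₁ p₂ p₃ : Fin 2 → ℝ}
    (hx : x ∈ s.extremePoints ℝ) (h1 : p₁ ∈ s) (h2 : p₂ ∈ s) (h3 : p₃ ∈ s)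
    {α β γ : ℝ} (ha : 0 < α) (hb : 0 < β) (hc : 0 < γ) (habc : α + β + γ = 1)
    (he : x = α • p₁ + β • p₂ + γ • p₃) : p₁ = x := by
  set y := (β/(β+γ)) • p₂ + (γ/(β+γ)) • p₃ with hy
  have hbg : 0 < β + γ := by linarith
  have hys : y ∈ s := hs h2 h3 (by positivity) (by positivity) (by field_simp)
  have h5 : (β+γ) • y = β • p₂ + γ • p₃ := by
    rw [hy, smul_add, smul_smul, smul_smul]
    have hne : β + γ ≠ 0 := ne_of_gt hbg
    congr 1
    · congr 1; field_simp
    · congr 1; field_simp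
  have hseg : x ∈ openSegment ℝ p₁ y := by
    refine ⟨α, β + γ, ha, hbg, by linarith, ?_⟩
    rw [h5, he, ← add_assoc]
  exact hx.2 h1 hys hseg


lemma bool_eq_of_ne_ne {a b v : Bool} (h1 : a ≠ v) (h2 : b ≠ v) : a = b := by
  cases a <;> cases b <;> cases v <;> simp_all

lemma bool_eq_not_of_ne {a v : Bool} (h : a ≠ v) : a = !v := by
  cases a <;> cases v <;> simp_all

def Bad (w : ℕ → Bool) (k : ℕ) : Prop :=
  ∃ p r, p + 2 ≤ r ∧ r + 1 < k ∧ w (r+1) = w p ∧ ∀ t, p < t → t ≤ r → w t = !(w p)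

lemma stepsConst (w : ℕ → Bool) (A B : ℕ) (h : ∀ t, A ≤ t → t < B → w t = w (t+1)) :
    ∀ t, A ≤ t → t ≤ B → w t = w A := by
  intro t
  induction t with
  | zero => intro h1 _; rw [Nat.le_zero.mp h1]
  | succ t ih =>
    intro h1 h2
    rcases Nat.eq_or_lt_of_le h1 with he | hlt
    · rw [← he]
    · have hst : w t = w (t+1) := h t (by omega) (by omega)
      rw [← hst]; exact ih (by omega) (by omega)

lemma bad_of_double {w : ℕ → Bool} {k i j l : ℕ} (hij : i < j) (hjl : j < l)
    (hci : w i ≠ w (i+1)) (hdj : w j = w (j+1)) (hcl : w l ≠ w (l+1)) (hlk : l + 1 < k) :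
    Bad w k := by
  classical
  have hPp : (fun t => w t ≠ w (t+1)) (Nat.findGreatest (fun t => w t ≠ w (t+1)) j) :=
    Nat.findGreatest_spec (P := fun t => w t ≠ w (t+1)) (m := i) (le_of_lt hij) hci
  set p := Nat.findGreatest (fun t => w t ≠ w (t+1)) j with hpd
  have hpj : p ≤ j := Nat.findGreatest_le j
  have hpj' : p < j := by
    rcases Nat.eq_or_lt_of_le hpj with he | h
    · exfalso; rw [he] at hPp; exact hPp hdj
    · exact h
  have hmax : ∀ t, p < t → t ≤ j → w t = w (t+1) := by
    intro t h1 h2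
    have := Nat.findGreatest_is_greatest (P := fun t => w t ≠ w (t+1)) h1 h2
    simpa using this
  have hc1 : ∀ t, p+1 ≤ t → t ≤ j+1 → w t = w (p+1) := by
    apply stepsConst w (p+1) (j+1)
    intro t h1 h2
    rcases Nat.eq_or_lt_of_le (Nat.lt_succ_iff.mp h2) with he | hlt'
    · rw [he]; exact hdj
    · exact hmax t (by omega) (by omega)
  have hex : ∃ s, w ((j+1)+s) ≠ w ((j+1)+s+1) := ⟨l - (j+1), by
    have e : (j+1) + (l - (j+1)) = l := by omega
    rw [e]; exact hcl⟩
  set s0 := Nat.find hex with hs0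
  have hPr : w ((j+1)+s0) ≠ w ((j+1)+s0+1) := Nat.find_spec hex
  set r := (j+1) + s0 with hrd
  have hrl : r ≤ l := by
    have := Nat.find_min' hex (m := l - (j+1)) (by
      have e : (j+1) + (l - (j+1)) = l := by omega
      rw [e]; exact hcl)
    omega
  have hc2 : ∀ t, j+1 ≤ t → t ≤ r → w t = w (j+1) := by
    apply stepsConst w (j+1) r
    intro t h1 h2
    obtain ⟨u, rfl⟩ : ∃ u, t = (j+1)+u := ⟨t - (j+1), by omega⟩
    have := Nat.find_min hex (m := u) (by omega)
    simpa using this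
  have hvj : w (j+1) = w (p+1) := hc1 (j+1) (by omega) (by omega)
  have hvr : w r = w (p+1) := by rw [hc2 r (by omega) le_rfl, hvj]
  have hne_p : w p ≠ w (p+1) := hPp
  have hne_r1 : w (r+1) ≠ w (p+1) := by rw [← hvr]; exact fun h => hPr h.symm
  refine ⟨p, r, by omega, by omega, bool_eq_of_ne_ne hne_r1 hne_p, ?_⟩
  intro t h1 h2
  have hwt : w t = w (p+1) := by
    rcases Nat.le_total t (j+1) with h3 | h3
    · exact hc1 t (by omega) h3
    · exact (hc2 t h3 h2).trans hvj
  rw [hwt]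
  have : w (p+1) ≠ w p := fun h => hne_p h.symm
  rw [bool_eq_not_of_ne this]

def pat (c d e : Bool) (A q : ℕ) : ℕ → Bool := fun i =>
  if i < A then c else if i < q then (if (i - A) % 2 = 0 then d else !d) else e

lemma key {w : ℕ → Bool} {k : ℕ} (hnb : ¬ Bad w k) :
    ∃ c d e A q, A ≤ k ∧ q ≤ k ∧ ∀ i, i < k → w i = pat c d e A q i := by
  classical
  by_cases hC : ∃ i, i + 1 < k ∧ w i ≠ w (i+1)
  · obtain ⟨i₀w, hi₀w⟩ := hC
    have hC' : ∃ i, i + 1 < k ∧ w i ≠ w (i+1) := ⟨i₀w, hi₀w⟩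
    set i₀ := Nat.find hC' with hi₀d
    have hi₀ : i₀ + 1 < k ∧ w i₀ ≠ w (i₀+1) := Nat.find_spec hC'
    have hi₀min : ∀ t, t < i₀ → ¬(t + 1 < k ∧ w t ≠ w (t+1)) := fun t ht => Nat.find_min hC' ht
    set i₁ := Nat.findGreatest (fun t => t + 1 < k ∧ w t ≠ w (t+1)) k with hi₁d
    have hi₁ : i₁ + 1 < k ∧ w i₁ ≠ w (i₁+1) :=
      Nat.findGreatest_spec (P := fun t => t + 1 < k ∧ w t ≠ w (t+1)) (m := i₀) (by have := hi₀.1; omega) hi₀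
    have hi₁max : ∀ t, i₁ < t → ¬(t + 1 < k ∧ w t ≠ w (t+1)) := by
      intro t ht
      rcases Nat.le_total t k with h | h
      · exact Nat.findGreatest_is_greatest ht h
      · intro hc; omega
    have hi01 : i₀ ≤ i₁ := by
      by_contra hh
      exact hi₁max i₀ (by omega) hi₀
    have hall : ∀ j, i₀ ≤ j → j ≤ i₁ → w j ≠ w (j+1) := by
      intro j hj1 hj2 hdj
      rcases Nat.eq_or_lt_of_le hj1 with he | h1
      · rw [← he] at hdj; exact hi₀.2 hdj
      rcases Nat.eq_or_lt_of_le hj2 with he | h2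
      · rw [he] at hdj; exact hi₁.2 hdj
      exact hnb (bad_of_double h1 h2 hi₀.2 hdj hi₁.2 hi₁.1)
    have halt : ∀ u, i₀ + 1 + u ≤ i₁ + 1 →
        w (i₀+1+u) = (if u % 2 = 0 then w (i₀+1) else !(w (i₀+1))) := by
      intro u
      induction u with
      | zero => intro _; simp
      | succ u ih =>
        intro hu
        have hch : w (i₀+1+u) ≠ w (i₀+1+u+1) := hall (i₀+1+u) (by omega) (by omega)
        have e1 : i₀+1+(u+1) = (i₀+1+u)+1 := by omega
        rw [e1, bool_eq_not_of_ne (fun h => hch h.symm), ih (by omega)]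
        have h2 : u % 2 = 0 ∨ u % 2 = 1 := by omega
        rcases h2 with h2 | h2
        · have h3 : (u+1) % 2 = 1 := by omega
          simp [h2, h3]
        · have h3 : (u+1) % 2 = 0 := by omega
          simp [h2, h3]
    refine ⟨w 0, w (i₀+1), w (i₁+1), i₀+1, i₁+2, by omega, by omega, ?_⟩
    intro i hik
    by_cases hr1 : i < i₀ + 1
    · rw [pat, if_pos hr1]
      apply stepsConst w 0 i _ i (Nat.zero_le _) le_rfl
      intro t h1 h2
      have := hi₀min t (by omega)
      simp only [not_and, not_not] at this
      exact this (by omega)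
    · by_cases hr2 : i < i₁ + 2
      · obtain ⟨u, rfl⟩ : ∃ u, i = (i₀+1)+u := ⟨i - (i₀+1), by omega⟩
        rw [pat, if_neg hr1, if_pos hr2, Nat.add_sub_cancel_left]
        exact halt u (by omega)
      · rw [pat, if_neg hr1, if_neg hr2]
        apply stepsConst w (i₁+1) i _ i (by omega) le_rfl
        intro t h1 h2
        have := hi₁max t (by omega)
        simp only [not_and, not_not] at this
        exact this (by omega)
  · push_neg at hC
    refine ⟨w 0, true, true, k, k, le_rfl, le_rfl, ?_⟩
    intro i hik
    rw [pat, if_pos hik]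
    apply stepsConst w 0 i _ i (Nat.zero_le _) le_rfl
    intro t h1 h2
    exact hC t (by omega)


lemma combo (X Y A B C : Matrix (Fin 2) (Fin 2) ℝ) (α β γ : ℝ) :
    X * ((α•A + β•B + γ•C) * Y) = α•(X*(A*Y)) + β•(X*(B*Y)) + γ•(X*(C*Y)) := by
  simp only [add_mul, mul_add, smul_mul_assoc, mul_smul_comm]

lemma main (a : Fin 2 → ℝ) (k : ℕ) : ∀ n (w : ℕ → Bool), mu w k = n →
    (seg w 0 k).mulVec a ∈ EPts {M2, M3} a k →
    ∃ c d e A q, A ≤ k ∧ q ≤ k ∧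
      (seg w 0 k).mulVec a = (seg (pat c d e A q) 0 k).mulVec a := by
  intro n
  induction n using Nat.strong_induction_on with
  | _ n IH =>
  intro w hmu hext
  by_cases hb : Bad w k
  swap
  · obtain ⟨c, d, e, A, q, h1, h2, h3⟩ := key hb
    exact ⟨c, d, e, A, q, h1, h2, by
      rw [seg_congr (w := w) (w' := pat c d e A q) (p := 0) (n := k)
        (fun i _ hi => h3 i (by omega))]⟩
  obtain ⟨p, r, hpr, hrk, hend, hmid⟩ := hb
  obtain ⟨l, rfl⟩ : ∃ l, r = p + 2 + l := ⟨r - (p+2), by omega⟩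
  obtain ⟨s, hk⟩ : ∃ s, k = (p + (l+4)) + s := ⟨k - (p + (l+4)), by omega⟩
  have hsplit : ∀ u : ℕ → Bool,
      seg u 0 k = seg u (p+(l+4)) s * (seg u p (l+4) * seg u 0 p) := by
    intro u
    rw [hk, seg_add u 0 (p+(l+4)) s, seg_add u 0 p (l+4)]
    simp [Nat.zero_add]
  have hconv : Convex ℝ (PHull {M2, M3} a k) := convex_convexHull ℝ _
  have hext' : (seg w 0 k).mulVec a ∈ Set.extremePoints ℝ (PHull {M2, M3} a k) := hext
  have hmem : ∀ u : ℕ → Bool, (seg u 0 k).mulVec a ∈ PHull {M2, M3} a k := by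
    intro u
    apply subset_convexHull ℝ (XSeq {M2, M3} a k)
    rw [xseq_eq]
    exact ⟨u, rfl⟩
  cases hwp : w p with
  | false =>
    set u1 : ℕ → Bool := fun i => if p ≤ i ∧ i < p+l+4 then decide (i = p+1) else w i with hu1
    set u2 : ℕ → Bool := fun i => if p ≤ i ∧ i < p+l+4 then decide (i ≤ p+l ∨ i = p+l+2) else w i with hu2
    set u3 : ℕ → Bool := fun i => if p ≤ i ∧ i < p+l+4 then decide (i = p+1 ∨ p+3 ≤ i) else w i with hu3
    have houtside : ∀ u : ℕ → Bool, (∀ i, ¬(p ≤ i ∧ i < p+l+4) → u i = w i) →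
        seg u (p+(l+4)) s = seg w (p+(l+4)) s ∧ seg u 0 p = seg w 0 p := by
      intro u hu
      exact ⟨seg_congr fun i h1 h2 => hu i (by omega),
        seg_congr fun i h1 h2 => hu i (by omega)⟩
    have hend' : w (p+l+3) = false := by
      have e1 : p + l + 3 = (p+2+l) + 1 := by omega
      rw [e1, hend, hwp]
    have hmid' : ∀ i, p + 1 ≤ i → i ≤ p + l + 2 → w i = true := by
      intro i h1 h2
      have := hmid i (by omega) (by omega)
      rw [hwp] at this; simpa using this
    have hmidw : seg w p (l+4) = M2 * M3^(l+2) * M2 := by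
      have h4 := seg_four w p 1 (l+2) 1 0 false true false false
        (fun i hi hi' => by rw [show i = p by omega, hwp])
        (fun i hi hi' => hmid' i (by omega) (by omega))
        (fun i hi hi' => by rw [show i = p+l+3 by omega, hend'])
        (fun i hi hi' => by omega)
      have e : 1 + (l+2) + 1 + 0 = l + 4 := by omega
      rw [e] at h4
      simpa [mat] using h4
    have hmid1 : seg u1 p (l+4) = M2^(l+2) * M3 * M2 := by
      have h4 := seg_four u1 p 1 1 (l+2) 0 false true false false
        (fun i hi hi' => by
          simp only [hu1]; rw [if_pos ⟨by omega, by omega⟩]; exact decide_eq_false (by omega))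
        (fun i hi hi' => by
          simp only [hu1]; rw [if_pos ⟨by omega, by omega⟩]; exact decide_eq_true (by omega))
        (fun i hi hi' => by
          simp only [hu1]; rw [if_pos ⟨by omega, by omega⟩]; exact decide_eq_false (by omega))
        (fun i hi hi' => by omega)
      have e : 1 + 1 + (l+2) + 0 = l + 4 := by omega
      rw [e] at h4
      simpa [mat] using h4
    have hmid2 : seg u2 p (l+4) = M2*M3*M2*M3^(l+1) := by
      have h4 := seg_four u2 p (l+1) 1 1 1 true false true false
        (fun i hi hi' => by
          simp only [hu2]; rw [if_pos ⟨by omega, by omega⟩]; exact decide_eq_true (by omega))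
        (fun i hi hi' => by
          simp only [hu2]; rw [if_pos ⟨by omega, by omega⟩]; exact decide_eq_false (by omega))
        (fun i hi hi' => by
          simp only [hu2]; rw [if_pos ⟨by omega, by omega⟩]; exact decide_eq_true (by omega))
        (fun i hi hi' => by
          simp only [hu2]; rw [if_pos ⟨by omega, by omega⟩]; exact decide_eq_false (by omega))
      have e : (l+1) + 1 + 1 + 1 = l + 4 := by omega
      rw [e] at h4
      simpa [mat] using h4
    have hmid3 : seg u3 p (l+4) = M3^(l+1)*M2*M3*M2 := by
      have h4 := seg_four u3 p 1 1 1 (l+1) false true false true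
        (fun i hi hi' => by
          simp only [hu3]; rw [if_pos ⟨by omega, by omega⟩]; exact decide_eq_false (by omega))
        (fun i hi hi' => by
          simp only [hu3]; rw [if_pos ⟨by omega, by omega⟩]; exact decide_eq_true (by omega))
        (fun i hi hi' => by
          simp only [hu3]; rw [if_pos ⟨by omega, by omega⟩]; exact decide_eq_false (by omega))
        (fun i hi hi' => by
          simp only [hu3]; rw [if_pos ⟨by omega, by omega⟩]; exact decide_eq_true (by omega))
      have e : 1 + 1 + 1 + (l+1) = l + 4 := by omega
      rw [e] at h4
      simpa [mat] using h4
    obtain ⟨hX1, hY1⟩ := houtside u1 (fun i hi => by simp only [hu1]; rw [if_neg hi])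
    obtain ⟨hX2, hY2⟩ := houtside u2 (fun i hi => by simp only [hu2]; rw [if_neg hi])
    obtain ⟨hX3, hY3⟩ := houtside u3 (fun i hi => by simp only [hu3]; rw [if_neg hi])
    have hcomb : seg w 0 k
        = (1/2:ℝ) • (seg u1 0 k) + (1/6:ℝ) • (seg u2 0 k) + (1/3:ℝ) • (seg u3 0 k) := by
      rw [hsplit w, hsplit u1, hsplit u2, hsplit u3, hX1, hY1, hX2, hY2, hX3, hY3,
        hmidw, hmid1, hmid2, hmid3, idF l]
      exact combo _ _ _ _ _ _ _ _
    have hvec : (seg w 0 k).mulVec a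
        = (1/2:ℝ) • ((seg u1 0 k).mulVec a) + (1/6:ℝ) • ((seg u2 0 k).mulVec a)
          + (1/3:ℝ) • ((seg u3 0 k).mulVec a) := by
      rw [hcomb, add_mulVec, add_mulVec, smul_mulVec, smul_mulVec, smul_mulVec]
    have hq1 : (seg u1 0 k).mulVec a = (seg w 0 k).mulVec a :=
      extreme_triple hconv hext' (hmem u1) (hmem u2) (hmem u3)
        (by norm_num) (by norm_num) (by norm_num) (by norm_num) hvec
    have hwN : w (p+l+2) = true := hmid' _ (by omega) (by omega)
    have huN : u1 (p+l+2) = false := by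
      simp only [hu1]; rw [if_pos ⟨by omega, by omega⟩]; exact decide_eq_false (by omega)
    have hagree : ∀ i, p+l+2 < i → u1 i = w i := by
      intro i hi
      by_cases hc : i = p + l + 3
      · rw [hc]
        simp only [hu1]; rw [if_pos ⟨by omega, by omega⟩, hend']
        exact decide_eq_false (by omega)
      · simp only [hu1]; rw [if_neg (by omega)]
    have hlt : mu u1 k < n := hmu ▸ mu_lt_of (by omega) hagree hwN huN
    obtain ⟨c, d, e, A, q, hA, hq, heq⟩ := IH (mu u1 k) hlt u1 rfl (by rw [hq1]; exact hext)
    exact ⟨c, d, e, A, q, hA, hq, by rw [← hq1, heq]⟩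
  | true =>
    set u1 : ℕ → Bool := fun i => if p ≤ i ∧ i < p+l+4 then decide (i ≤ p+l+1 ∨ i = p+l+3) else w i with hu1
    set u2 : ℕ → Bool := fun i => if p ≤ i ∧ i < p+l+4 then decide (i = p ∨ i = p+2) else w i with hu2
    set u3 : ℕ → Bool := fun i => if p ≤ i ∧ i < p+l+4 then decide (i = p+l+1 ∨ i = p+l+3) else w i with hu3
    have houtside : ∀ u : ℕ → Bool, (∀ i, ¬(p ≤ i ∧ i < p+l+4) → u i = w i) →
        seg u (p+(l+4)) s = seg w (p+(l+4)) s ∧ seg u 0 p = seg w 0 p := by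
      intro u hu
      exact ⟨seg_congr fun i h1 h2 => hu i (by omega),
        seg_congr fun i h1 h2 => hu i (by omega)⟩
    have hend' : w (p+l+3) = true := by
      have e1 : p + l + 3 = (p+2+l) + 1 := by omega
      rw [e1, hend, hwp]
    have hmid' : ∀ i, p + 1 ≤ i → i ≤ p + l + 2 → w i = false := by
      intro i h1 h2
      have := hmid i (by omega) (by omega)
      rw [hwp] at this; simpa using this
    have hmidw : seg w p (l+4) = M3 * M2^(l+2) * M3 := by
      have h4 := seg_four w p 1 (l+2) 1 0 true false true true
        (fun i hi hi' => by rw [show i = p by omega, hwp])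
        (fun i hi hi' => hmid' i (by omega) (by omega))
        (fun i hi hi' => by rw [show i = p+l+3 by omega, hend'])
        (fun i hi hi' => by omega)
      have e : 1 + (l+2) + 1 + 0 = l + 4 := by omega
      rw [e] at h4
      simpa [mat] using h4
    have hmid1 : seg u1 p (l+4) = M3*M2*M3^(l+2) := by
      have h4 := seg_four u1 p (l+2) 1 1 0 true false true true
        (fun i hi hi' => by
          simp only [hu1]; rw [if_pos ⟨by omega, by omega⟩]; exact decide_eq_true (by omega))
        (fun i hi hi' => by
          simp only [hu1]; rw [if_pos ⟨by omega, by omega⟩]; exact decide_eq_false (by omega))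
        (fun i hi hi' => by
          simp only [hu1]; rw [if_pos ⟨by omega, by omega⟩]; exact decide_eq_true (by omega))
        (fun i hi hi' => by omega)
      have e : (l+2) + 1 + 1 + 0 = l + 4 := by omega
      rw [e] at h4
      simpa [mat] using h4
    have hmid2 : seg u2 p (l+4) = M2^(l+1)*M3*M2*M3 := by
      have h4 := seg_four u2 p 1 1 1 (l+1) true false true false
        (fun i hi hi' => by
          simp only [hu2]; rw [if_pos ⟨by omega, by omega⟩]; exact decide_eq_true (by omega))
        (fun i hi hi' => by
          simp only [hu2]; rw [if_pos ⟨by omega, by omega⟩]; exact decide_eq_false (by omega))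
        (fun i hi hi' => by
          simp only [hu2]; rw [if_pos ⟨by omega, by omega⟩]; exact decide_eq_true (by omega))
        (fun i hi hi' => by
          simp only [hu2]; rw [if_pos ⟨by omega, by omega⟩]; exact decide_eq_false (by omega))
      have e : 1 + 1 + 1 + (l+1) = l + 4 := by omega
      rw [e] at h4
      simpa [mat] using h4
    have hmid3 : seg u3 p (l+4) = M3*M2*M3*M2^(l+1) := by
      have h4 := seg_four u3 p (l+1) 1 1 1 false true false true
        (fun i hi hi' => by
          simp only [hu3]; rw [if_pos ⟨by omega, by omega⟩]; exact decide_eq_false (by omega))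
        (fun i hi hi' => by
          simp only [hu3]; rw [if_pos ⟨by omega, by omega⟩]; exact decide_eq_true (by omega))
        (fun i hi hi' => by
          simp only [hu3]; rw [if_pos ⟨by omega, by omega⟩]; exact decide_eq_false (by omega))
        (fun i hi hi' => by
          simp only [hu3]; rw [if_pos ⟨by omega, by omega⟩]; exact decide_eq_true (by omega))
      have e : (l+1) + 1 + 1 + 1 = l + 4 := by omega
      rw [e] at h4
      simpa [mat] using h4
    obtain ⟨hX1, hY1⟩ := houtside u1 (fun i hi => by simp only [hu1]; rw [if_neg hi])
    obtain ⟨hX2, hY2⟩ := houtside u2 (fun i hi => by simp only [hu2]; rw [if_neg hi])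
    obtain ⟨hX3, hY3⟩ := houtside u3 (fun i hi => by simp only [hu3]; rw [if_neg hi])
    have hcomb : seg w 0 k
        = (1/2:ℝ) • (seg u1 0 k) + (1/6:ℝ) • (seg u2 0 k) + (1/3:ℝ) • (seg u3 0 k) := by
      rw [hsplit w, hsplit u1, hsplit u2, hsplit u3, hX1, hY1, hX2, hY2, hX3, hY3,
        hmidw, hmid1, hmid2, hmid3, idT l]
      exact combo _ _ _ _ _ _ _ _
    have hvec : (seg w 0 k).mulVec a
        = (1/2:ℝ) • ((seg u1 0 k).mulVec a) + (1/6:ℝ) • ((seg u2 0 k).mulVec a)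
          + (1/3:ℝ) • ((seg u3 0 k).mulVec a) := by
      rw [hcomb, add_mulVec, add_mulVec, smul_mulVec, smul_mulVec, smul_mulVec]
    have hvec2 : (seg w 0 k).mulVec a
        = (1/6:ℝ) • ((seg u2 0 k).mulVec a) + (1/2:ℝ) • ((seg u1 0 k).mulVec a)
          + (1/3:ℝ) • ((seg u3 0 k).mulVec a) := by
      rw [hvec]; module
    have hq2 : (seg u2 0 k).mulVec a = (seg w 0 k).mulVec a :=
      extreme_triple hconv hext' (hmem u2) (hmem u1) (hmem u3)
        (by norm_num) (by norm_num) (by norm_num) (by norm_num) hvec2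
    have hwN : w (p+l+3) = true := hend'
    have huN : u2 (p+l+3) = false := by
      simp only [hu2]; rw [if_pos ⟨by omega, by omega⟩]; exact decide_eq_false (by omega)
    have hagree : ∀ i, p+l+3 < i → u2 i = w i := by
      intro i hi
      simp only [hu2]; rw [if_neg (by omega)]
    have hlt : mu u2 k < n := hmu ▸ mu_lt_of (by omega) hagree hwN huN
    obtain ⟨c, d, e, A, q, hA, hq, heq⟩ := IH (mu u2 k) hlt u2 rfl (by rw [hq2]; exact hext)
    exact ⟨c, d, e, A, q, hA, hq, by rw [← hq2, heq]⟩

end S17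

/-- `N_k(Σ₃, a) = O(k²)` uniformly in `a`, where `Σ₃ = {A₂, A₃}`. -/
theorem stmt17 : ∃ α : ℝ, 0 < α ∧ ∃ k₀ : ℕ, ∀ a : Fin 2 → ℝ, ∀ k : ℕ, k₀ ≤ k →
    (NExt {M2, M3} a k : ℝ) ≤ α * (k : ℝ) ^ 2 := by
  refine ⟨32, by norm_num, 1, ?_⟩
  intro a k hk
  set f : Bool × Bool × Bool × Fin (k+1) × Fin (k+1) → (Fin 2 → ℝ) :=
    fun t => (S17.seg (S17.pat t.1 t.2.1 t.2.2.1 t.2.2.2.1 t.2.2.2.2) 0 k).mulVec a with hf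
  have hsub : EPts {M2, M3} a k ⊆ Set.range f := by
    intro x hx
    have hx2 : x ∈ Set.extremePoints ℝ (convexHull ℝ (XSeq {M2, M3} a k)) := hx
    have hx' : x ∈ XSeq {M2, M3} a k := extremePoints_convexHull_subset hx2
    rw [S17.xseq_eq] at hx'
    obtain ⟨w, rfl⟩ := hx'
    obtain ⟨c, d, e, A, q, hA, hq, heq⟩ := S17.main a k (S17.mu w k) w rfl hx
    exact ⟨(c, d, e, ⟨A, by omega⟩, ⟨q, by omega⟩), heq.symm⟩
  have h1 : NExt {M2, M3} a k ≤ (Set.range f).ncard :=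
    Set.ncard_le_ncard hsub (Set.finite_range f)
  have h2 : (Set.range f).ncard ≤ 8 * (k+1)^2 := by
    rw [← Set.image_univ]
    calc (f '' Set.univ).ncard ≤ (Set.univ : Set (Bool × Bool × Bool × Fin (k+1) × Fin (k+1))).ncard :=
          Set.ncard_image_le Set.finite_univ
      _ = 8 * (k+1)^2 := by
          rw [Set.ncard_univ, Nat.card_eq_fintype_card]
          simp [Fintype.card_prod]
          ring
  have h3 : (NExt {M2, M3} a k : ℝ) ≤ 8 * ((k:ℝ)+1)^2 := by
    have := h1.trans h2
    calc (NExt {M2, M3} a k : ℝ) ≤ ((8 * (k+1)^2 : ℕ) : ℝ) := by exact_mod_cast this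
      _ = 8 * ((k:ℝ)+1)^2 := by push_cast; ring
  have hk1 : (1:ℝ) ≤ (k:ℝ) := by exact_mod_cast hk
  nlinarith [h3, hk1]

end
end

section
/- There exist a real number α > 0 and a natural number k₀ such that for every a ∈ ℝ² and every integer k ≥ k₀, N_k(Σ₄, a) ≤ α·k², where Σ₄ = {A₄, A₅}. Moreover, for every even natural number k and every a ∈ ℝ², P_k(Σ₄, a) = P_k(Σ₃, a), where Σ₃ = {A₂, A₃}. -/
open Matrix Set

noncomputable section

namespace Stmt18

def Mg (b : Bool) : Matrix (Fin 2) (Fin 2) ℝ := if b then M3 else M2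

def mat (w : List Bool) : Matrix (Fin 2) (Fin 2) ℝ := (w.map Mg).prod

lemma mat_nil : mat [] = 1 := rfl
lemma mat_cons (x : Bool) (w : List Bool) : mat (x :: w) = Mg x * mat w := by
  simp [mat]
lemma mat_append (u v : List Bool) : mat (u ++ v) = mat u * mat v := by
  simp [mat]

lemma mat_replicate (m : ℕ) (b : Bool) : mat (List.replicate m b) = (Mg b) ^ m := by
  induction m with
  | zero => simp [mat]
  | succ n ih => rw [List.replicate_succ, mat_cons, ih, pow_succ']

lemma M2_pow (m : ℕ) : M2 ^ m = !![1, (m : ℝ); 0, 1] := by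
  induction m with
  | zero => simp [Matrix.one_fin_two]
  | succ n ih =>
    rw [pow_succ, ih, M2, Matrix.mul_fin_two]
    push_cast
    norm_num
    ring

lemma M3_pow (m : ℕ) : M3 ^ m = !![1, 0; (m : ℝ), 1] := by
  induction m with
  | zero => simp [Matrix.one_fin_two]
  | succ n ih =>
    rw [pow_succ, ih, M3, Matrix.mul_fin_two]
    push_cast
    norm_num

lemma core_f (n : ℕ) :
    M2 * M3 ^ (n+1) * M2 =
      (1/2 : ℝ) • (M2 * M3 * M2 ^ (n+1)) +
      (1/3 : ℝ) • (M2 * M3 * M2 * M3 ^ n) +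
      (1/6 : ℝ) • (M3 ^ n * (M2 * M3 * M2)) := by
  simp only [M2_pow, M3_pow]
  ext i j
  fin_cases i <;> fin_cases j <;>
    · simp [M2, M3, Matrix.mul_apply, Fin.sum_univ_two]
      push_cast
      ring

lemma core_t (n : ℕ) :
    M3 * M2 ^ (n+1) * M3 =
      (1/2 : ℝ) • (M3 * M2 * M3 ^ (n+1)) +
      (1/3 : ℝ) • (M3 * M2 * M3 * M2 ^ n) +
      (1/6 : ℝ) • (M2 ^ n * (M3 * M2 * M3)) := by
  simp only [M2_pow, M3_pow]
  ext i j
  fin_cases i <;> fin_cases j <;>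
    · simp [M2, M3, Matrix.mul_apply, Fin.sum_univ_two]
      push_cast
      ring

/-- The core convexity identity. -/
lemma core_identity (c : Bool) (m : ℕ) (hm : 1 ≤ m) :
    Mg c * (Mg (!c)) ^ m * Mg c =
      (1/2 : ℝ) • (Mg c * Mg (!c) * (Mg c) ^ m) +
      (1/3 : ℝ) • (Mg c * Mg (!c) * Mg c * (Mg (!c)) ^ (m - 1)) +
      (1/6 : ℝ) • ((Mg (!c)) ^ (m - 1) * (Mg c * Mg (!c) * Mg c)) := by
  obtain ⟨n, rfl⟩ : ∃ n, m = n + 1 := ⟨m - 1, (Nat.succ_pred_eq_of_pos hm).symm⟩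
  rw [Nat.add_sub_cancel]
  cases c
  · simpa [Mg] using core_f n
  · simpa [Mg] using core_t n


open Classical in
/-- Position-weighted count of "bad pairs": adjacent equal letters with a different
letter occurring later. -/
def psi : List Bool → ℕ
  | [] => 0
  | x :: t => psi t + if t.head? = some x ∧ ¬ t.all (· == x) = true then t.length else 0

lemma psi_nil : psi [] = 0 := rfl

open Classical in
lemma psi_cons (x : Bool) (t : List Bool) :
    psi (x :: t) = psi t + if t.head? = some x ∧ ¬ t.all (· == x) = true then t.length else 0 :=
  rfl

/-- Prefix congruence for ψ: if two suffixes have the same length, head and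
"all-constant" status, then prepending the same prefix changes ψ by the same amount. -/
lemma psi_prefix (X A B : List Bool) (hlen : A.length = B.length)
    (hhead : A.head? = B.head?) (hall : ∀ b : Bool, A.all (· == b) = B.all (· == b)) :
    psi (X ++ A) + psi B = psi (X ++ B) + psi A := by
  induction X with
  | nil => simp [Nat.add_comm]
  | cons x X ih =>
    have hh : (X ++ A).head? = (X ++ B).head? := by
      cases X with
      | nil => simpa using hhead
      | cons y Y => simp
    have ha : ∀ b : Bool, (X ++ A).all (· == b) = (X ++ B).all (· == b) := by
      intro b; simp [List.all_append, hall b]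
    have hl : (X ++ A).length = (X ++ B).length := by simp [hlen]
    rw [List.cons_append, List.cons_append, psi_cons, psi_cons, hh, hl, ha x]
    omega


lemma psi_cons_ne {x y : Bool} (t : List Bool) (h : x ≠ y) :
    psi (x :: y :: t) = psi (y :: t) := by
  rw [psi_cons]
  simp [h.symm]

open Classical in
lemma psi_rep_d (c d : Bool) (hcd : c ≠ d) (Z : List Bool) (n : ℕ) :
    psi (List.replicate (n+2) d ++ (c :: Z)) =
      psi (List.replicate (n+1) d ++ (c :: Z)) + (n + 2 + Z.length) := by
  have hhead : (List.replicate (n+1) d ++ (c :: Z)).head? = some d := by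
    simp [List.replicate_succ]
  have hall : (List.replicate (n+1) d ++ (c :: Z)).all (· == d) = false := by
    rw [List.all_eq_false]
    exact ⟨c, by simp, by simp [hcd]⟩
  have : List.replicate (n+2) d ++ (c :: Z) = d :: (List.replicate (n+1) d ++ (c :: Z)) := by
    simp [List.replicate_succ]
  rw [this, psi_cons, hhead, hall]
  simp [List.length_replicate]
  omega

open Classical in
lemma psi_rep_c (c : Bool) (Z : List Bool) (n : ℕ) :
    psi (List.replicate (n+2) c ++ Z) ≤
      psi (List.replicate (n+1) c ++ Z) + (n + 1 + Z.length) := by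
  have : List.replicate (n+2) c ++ Z = c :: (List.replicate (n+1) c ++ Z) := by
    simp [List.replicate_succ]
  rw [this, psi_cons]
  have hl : (List.replicate (n+1) c ++ Z).length = n + 1 + Z.length := by simp
  split <;> omega

lemma psi_key (c d : Bool) (hcd : c ≠ d) (Z : List Bool) (n : ℕ) :
    psi (List.replicate (n+1) c ++ Z) + n ≤ psi (List.replicate (n+1) d ++ (c :: Z)) := by
  induction n with
  | zero =>
    have h1 : List.replicate 1 d ++ (c :: Z) = d :: c :: Z := by simp
    have h2 : (List.replicate 1 c ++ Z) = c :: Z := by simp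
    rw [h1, h2, psi_cons_ne _ (fun h => hcd h.symm)]
    omega
  | succ n ih =>
    show psi (List.replicate (n+2) c ++ Z) + (n+1) ≤ psi (List.replicate (n+2) d ++ (c :: Z))
    have hd := psi_rep_d c d hcd Z n
    have hc := psi_rep_c c Z n
    omega


/-- The four words in the rewriting identity. -/
def wA (c : Bool) (m : ℕ) (Z : List Bool) : List Bool := c :: (List.replicate m (!c) ++ c :: Z)
def wB (c : Bool) (m : ℕ) (Z : List Bool) : List Bool := c :: (!c) :: (List.replicate m c ++ Z)
def wC (c : Bool) (m : ℕ) (Z : List Bool) : List Bool :=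
  c :: (!c) :: c :: (List.replicate (m-1) (!c) ++ Z)
def wD (c : Bool) (m : ℕ) (Z : List Bool) : List Bool :=
  List.replicate (m-1) (!c) ++ (c :: (!c) :: c :: Z)

lemma len_wA (c m Z) : (wA c m Z).length = m + 2 + Z.length := by simp [wA]; omega
lemma len_wB (c m Z) : (wB c m Z).length = m + 2 + Z.length := by simp [wB]; omega
lemma len_wC (c m Z) (hm : 1 ≤ m) : (wC c m Z).length = m + 2 + Z.length := by
  simp [wC]; omega
lemma len_wD (c m Z) (hm : 1 ≤ m) : (wD c m Z).length = m + 2 + Z.length := by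
  simp [wD]; omega

lemma ne_not (c : Bool) : c ≠ !c := by cases c <;> simp
lemma not_ne (c : Bool) : (!c) ≠ c := by cases c <;> simp

lemma mem_wA_self (c m Z) : c ∈ wA c m Z := by simp [wA]
lemma mem_wA_not (c m Z) (hm : 1 ≤ m) : (!c) ∈ wA c m Z := by
  simp [wA, List.mem_replicate]
  left; omega
lemma mem_wB_self (c m Z) : c ∈ wB c m Z := by simp [wB]
lemma mem_wB_not (c m Z) : (!c) ∈ wB c m Z := by simp [wB]

lemma all_eq_false_of_mem {l : List Bool} {b : Bool} (hc : b ∈ l) (hd : (!b) ∈ l) :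
    ∀ x : Bool, l.all (· == x) = false := by
  intro x
  rw [List.all_eq_false]
  by_cases hx : x = b
  · exact ⟨!b, hd, by simp [hx, not_ne]⟩
  · have : x = !b := by cases x <;> cases b <;> simp_all
    exact ⟨b, hc, by simp [this, ne_not]⟩

lemma psi_decrease (X Z : List Bool) (c : Bool) (m : ℕ) (hm : 2 ≤ m) :
    psi (X ++ wB c m Z) + 1 ≤ psi (X ++ wA c m Z) := by
  obtain ⟨n, rfl⟩ : ∃ n, m = n + 1 := ⟨m - 1, by omega⟩
  have hA : psi (wA c (n+1) Z) = psi (List.replicate (n+1) (!c) ++ (c :: Z)) := by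
    have h1 : wA c (n+1) Z = c :: ((!c) :: (List.replicate n (!c) ++ c :: Z)) := by
      simp [wA, List.replicate_succ]
    have h2 : List.replicate (n+1) (!c) ++ (c :: Z)
        = (!c) :: (List.replicate n (!c) ++ c :: Z) := by
      simp [List.replicate_succ]
    rw [h1, psi_cons_ne _ (ne_not c), ← h2]
  have hB : psi (wB c (n+1) Z) = psi (List.replicate (n+1) c ++ Z) := by
    have h1 : wB c (n+1) Z = c :: ((!c) :: (List.replicate (n+1) c ++ Z)) := by
      simp [wB]
    have h2 : List.replicate (n+1) c ++ Z = c :: (List.replicate n c ++ Z) := by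
      simp [List.replicate_succ]
    rw [h1, psi_cons_ne _ (ne_not c), h2, psi_cons_ne _ (not_ne c), ← h2]
  have hkey := psi_key c (!c) (ne_not c) Z n
  have hpre := psi_prefix X (wA c (n+1) Z) (wB c (n+1) Z)
    (by rw [len_wA, len_wB])
    (by simp [wA, wB])
    (by
      intro b
      rw [all_eq_false_of_mem (mem_wA_self c (n+1) Z) (mem_wA_not c (n+1) Z (by omega)) b,
        all_eq_false_of_mem (mem_wB_self c (n+1) Z) (mem_wB_not c (n+1) Z) b])
  omega

lemma mat_identity (X Z : List Bool) (c : Bool) (m : ℕ) (hm : 1 ≤ m) :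
    mat (X ++ wA c m Z) =
      (1/2 : ℝ) • mat (X ++ wB c m Z) +
      (1/3 : ℝ) • mat (X ++ wC c m Z) +
      (1/6 : ℝ) • mat (X ++ wD c m Z) := by
  have h := core_identity c m hm
  have h' := congrArg (fun Y => mat X * (Y * mat Z)) h
  simp only [wA, wB, wC, wD, mat_append, mat_cons, mat_replicate] at *
  simp only [add_mul, mul_add, smul_mul_assoc, mul_smul_comm, mul_assoc] at h' ⊢
  exact h'


/-- A word is *bad* if it contains a "long middle run". -/
def Bad (w : List Bool) : Prop :=
  ∃ (X : List Bool) (c : Bool) (m : ℕ) (Z : List Bool), 2 ≤ m ∧ w = X ++ wA c m Z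

/-- Alternating word of `s` single letters starting with `b`, followed by a final
run of `r` copies of the next letter. -/
def altW : Bool → ℕ → ℕ → List Bool
  | b, 0, r => List.replicate r b
  | b, s+1, r => b :: altW (!b) s r

/-- Canonical family word: first run of length `a`, then `s` alternating single
letters, then a final run of length `r`. -/
def fW (c : Bool) (a s r : ℕ) : List Bool := List.replicate a c ++ altW (!c) s r

lemma len_altW (b : Bool) (s r : ℕ) : (altW b s r).length = s + r := by
  induction s generalizing b with
  | zero => simp [altW]
  | succ n ih => simp [altW, ih]; omega

lemma len_fW (c : Bool) (a s r : ℕ) : (fW c a s r).length = a + s + r := by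
  simp [fW, len_altW]; omega

lemma altW_nil_or_cons (b : Bool) (s r : ℕ) :
    altW b s r = [] ∨ ∃ rest, altW b s r = b :: rest := by
  cases s with
  | zero =>
    cases r with
    | zero => left; rfl
    | succ r' => right; exact ⟨List.replicate r' b, by simp [altW, List.replicate_succ]⟩
  | succ s' => right; exact ⟨altW (!b) s' r, rfl⟩

lemma bad_cons {w : List Bool} (x : Bool) (h : Bad w) : Bad (x :: w) := by
  obtain ⟨X, c, m, Z, hm, rfl⟩ := h
  exact ⟨x :: X, c, m, Z, hm, rfl⟩

/-- Every word is either bad or a family word. -/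
lemma rep (w : List Bool) : Bad w ∨ ∃ c a s r, w = fW c a s r := by
  induction w with
  | nil => exact Or.inr ⟨false, 0, 0, 0, rfl⟩
  | cons x w ih =>
    rcases ih with hb | ⟨c, a, s, r, rfl⟩
    · exact Or.inl (bad_cons x hb)
    · by_cases hx : x = c
      · subst hx
        cases a with
        | zero =>
          -- fW x 0 s r = altW (!x) s r
          cases s with
          | zero =>
            -- w = replicate r (!x)
            right
            exact ⟨x, 1, 0, r, by simp [fW, altW, List.replicate_succ]⟩
          | succ s' =>
            -- w = (!x) :: altW x s' r ; prepending x : head ≠ (!x)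
            right
            refine ⟨x, 1, s' + 1, r, ?_⟩
            simp [fW, altW, List.replicate_succ]
        | succ a' =>
          right
          exact ⟨x, a' + 2, s, r, by simp [fW, List.replicate_succ]⟩
      · have hx' : x = !c := by cases x <;> cases c <;> simp_all
        subst hx'
        cases a with
        | zero =>
          cases s with
          | zero =>
            -- w = replicate r (!c), prepend !c
            right
            exact ⟨!c, r + 1, 0, 0, by simp [fW, altW, List.replicate_succ]⟩
          | succ s' =>
            -- prepending !c gives !c :: !c :: altW c s' r = replicate 2 (!c) ++ altW c s' r
            right
            refine ⟨!c, 2, s', r, ?_⟩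
            simp [fW, altW, List.replicate_succ]
        | succ a' =>
          cases a' with
          | zero =>
            -- w = [c] ++ altW (!c) s r, prepend !c : fW (!c) 1 (s+1) r
            right
            refine ⟨!c, 1, s + 1, r, ?_⟩
            simp [fW, altW, List.replicate_succ]
          | succ a'' =>
            -- a ≥ 2
            rcases altW_nil_or_cons (!c) s r with hnil | ⟨rest, hrest⟩
            · right
              refine ⟨!c, 1, 0, a'' + 2, ?_⟩
              simp [fW, altW, hnil, List.replicate_succ]
            · left
              refine ⟨[], !c, a'' + 2, rest, by omega, ?_⟩
              simp [wA, hrest, fW, List.replicate_succ]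
  

/-- The family of "good" (extreme-point candidate) words of length `k`. -/
def FamS (k : ℕ) : Set (List Bool) :=
  {w | w.length = k ∧ ∃ c a s r, w = fW c a s r}

lemma famS_nonempty (k : ℕ) : (FamS k).Nonempty :=
  ⟨List.replicate k false, by simp, false, k, 0, 0, by simp [fW, altW]⟩

section Delta

variable (k : ℕ) (a₀ : Fin 2 → ℝ)

/-- The point of a word. -/
def pt (a₀ : Fin 2 → ℝ) (w : List Bool) : Fin 2 → ℝ := (mat w).mulVec a₀

/-- Key step: the convex-combination inequality for `infDist`. -/
lemma infDist_combo {C : Set (Fin 2 → ℝ)} (hC : Convex ℝ C) (hcpt : IsCompact C)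
    (hne : C.Nonempty) (x y z : Fin 2 → ℝ) :
    Metric.infDist ((1/2 : ℝ) • x + (1/3 : ℝ) • y + (1/6 : ℝ) • z) C ≤
      (1/2) * Metric.infDist x C + (1/3) * Metric.infDist y C
        + (1/6) * Metric.infDist z C := by
  obtain ⟨p, hp, hxp⟩ := hcpt.exists_infDist_eq_dist hne x
  obtain ⟨q, hq, hyq⟩ := hcpt.exists_infDist_eq_dist hne y
  obtain ⟨u, hu, hzu⟩ := hcpt.exists_infDist_eq_dist hne z
  have hmid : (2/3 : ℝ) • q + (1/3 : ℝ) • u ∈ C := hC hq hu (by norm_num) (by norm_num) (by norm_num)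
  have hcomb : (1/2 : ℝ) • p + (1/2 : ℝ) • ((2/3 : ℝ) • q + (1/3 : ℝ) • u) ∈ C :=
    hC hp hmid (by norm_num) (by norm_num) (by norm_num)
  have hre : (1/2 : ℝ) • p + (1/2 : ℝ) • ((2/3 : ℝ) • q + (1/3 : ℝ) • u)
      = (1/2 : ℝ) • p + (1/3 : ℝ) • q + (1/6 : ℝ) • u := by
    rw [smul_add, smul_smul, smul_smul]
    norm_num
    abel
  rw [hre] at hcomb
  calc Metric.infDist ((1/2 : ℝ) • x + (1/3 : ℝ) • y + (1/6 : ℝ) • z) C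
      ≤ dist ((1/2 : ℝ) • x + (1/3 : ℝ) • y + (1/6 : ℝ) • z)
          ((1/2 : ℝ) • p + (1/3 : ℝ) • q + (1/6 : ℝ) • u) :=
        Metric.infDist_le_dist_of_mem hcomb
    _ ≤ (1/2) * dist x p + (1/3) * dist y q + (1/6) * dist z u := by
        rw [dist_eq_norm, dist_eq_norm, dist_eq_norm, dist_eq_norm]
        have : (1/2 : ℝ) • x + (1/3 : ℝ) • y + (1/6 : ℝ) • z
            - ((1/2 : ℝ) • p + (1/3 : ℝ) • q + (1/6 : ℝ) • u)
            = (1/2 : ℝ) • (x - p) + ((1/3 : ℝ) • (y - q) + (1/6 : ℝ) • (z - u)) := by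
          simp [smul_sub]
          abel
        rw [this]
        have h1 := norm_add_le ((1/2 : ℝ) • (x - p)) ((1/3 : ℝ) • (y - q) + (1/6 : ℝ) • (z - u))
        have h2 := norm_add_le ((1/3 : ℝ) • (y - q)) ((1/6 : ℝ) • (z - u))
        simp only [norm_smul, Real.norm_eq_abs] at h1 h2 ⊢
        have e1 : |(1:ℝ)/2| = 1/2 := by norm_num
        have e2 : |(1:ℝ)/3| = 1/3 := by norm_num
        have e3 : |(1:ℝ)/6| = 1/6 := by norm_num
        rw [e1] at h1
        rw [e2, e3] at h2
        linarith
    _ = (1/2) * Metric.infDist x C + (1/3) * Metric.infDist y C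
          + (1/6) * Metric.infDist z C := by rw [hxp, hyq, hzu]

/-- The central structural theorem: every orbit point lies in the convex hull of the
points of family words. -/
theorem main_hull :
    ∀ w : List Bool, w.length = k →
      pt a₀ w ∈ convexHull ℝ (pt a₀ '' FamS k) := by
  classical
  set F : Set (Fin 2 → ℝ) := pt a₀ '' FamS k with hF
  have hFfin : F.Finite := (((List.finite_length_eq Bool k).subset (fun w hw => hw.1)).image _)
  have hFne : F.Nonempty := (famS_nonempty k).image _
  set C := convexHull ℝ F with hCdef
  have hCc : Convex ℝ C := convex_convexHull ℝ F
  have hCcpt : IsCompact C := hFfin.isCompact_convexHull ℝ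
  have hCcl : IsClosed C := hFfin.isClosed_convexHull ℝ
  have hCne : C.Nonempty := hFne.mono (subset_convexHull ℝ F)
  set d : List Bool → ℝ := fun w => Metric.infDist (pt a₀ w) C with hd
  set S : Set (List Bool) := {w | w.length = k} with hS
  have hSfin : S.Finite := List.finite_length_eq Bool k
  have hSne : S.Nonempty := ⟨List.replicate k false, by simp [hS]⟩
  -- maximizer of d
  obtain ⟨w₁, hw₁S, hw₁max⟩ := Set.Finite.exists_maximalFor d S hSfin hSne
  set δ := d w₁ with hδ
  have hmax : ∀ w ∈ S, d w ≤ δ := by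
    intro w hw
    rcases le_total (d w) δ with h | h
    · exact h
    · exact (hw₁max (j := w) hw h).ge
  -- minimizer of psi among maximizers
  set T : Set (List Bool) := {w ∈ S | d w = δ} with hT
  have hTne : T.Nonempty := ⟨w₁, hw₁S, rfl⟩
  have hpsine : (psi '' T).Nonempty := hTne.image _
  obtain ⟨w₀, hw₀T, hw₀psi⟩ : ∃ w₀ ∈ T, psi w₀ = sInf (psi '' T) := by
    obtain ⟨w₀, hw₀, h⟩ := Nat.sInf_mem hpsine
    exact ⟨w₀, hw₀, h⟩
  -- w₀ cannot be bad
  have hnotbad : ¬ Bad w₀ := by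
    rintro ⟨X, c, m, Z, hm, hw0eq⟩
    have hw₀S : w₀ ∈ S := hw₀T.1
    have hw₀δ : d w₀ = δ := hw₀T.2
    have hlen : w₀.length = k := hw₀S
    have hm1 : 1 ≤ m := by omega
    have hlB : (X ++ wB c m Z).length = k := by
      rw [← hlen, hw0eq]; simp [len_wA, len_wB]
    have hlC : (X ++ wC c m Z).length = k := by
      rw [← hlen, hw0eq]; simp [len_wA, len_wC _ _ _ hm1]
    have hlD : (X ++ wD c m Z).length = k := by
      rw [← hlen, hw0eq]; simp [len_wA, len_wD _ _ _ hm1]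
    -- the convex identity at the level of points
    have hid : pt a₀ w₀ = (1/2 : ℝ) • pt a₀ (X ++ wB c m Z)
        + (1/3 : ℝ) • pt a₀ (X ++ wC c m Z) + (1/6 : ℝ) • pt a₀ (X ++ wD c m Z) := by
      rw [hw0eq]
      unfold pt
      rw [mat_identity X Z c m hm1]
      rw [Matrix.add_mulVec, Matrix.add_mulVec, Matrix.smul_mulVec,
        Matrix.smul_mulVec, Matrix.smul_mulVec]
    have hcombo : d w₀ ≤ (1/2) * d (X ++ wB c m Z) + (1/3) * d (X ++ wC c m Z)
        + (1/6) * d (X ++ wD c m Z) := by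
      rw [hd]
      simp only
      rw [hid]
      exact infDist_combo hCc hCcpt hCne _ _ _
    have hdB : d (X ++ wB c m Z) < δ := by
      rcases lt_or_eq_of_le (hmax _ hlB) with h | h
      · exact h
      · exfalso
        have hBT : (X ++ wB c m Z) ∈ T := ⟨hlB, h⟩
        have h1 : sInf (psi '' T) ≤ psi (X ++ wB c m Z) :=
          Nat.sInf_le ⟨_, hBT, rfl⟩
        have h2 := psi_decrease X Z c m hm
        rw [← hw0eq] at h2
        omega
    have hdC : d (X ++ wC c m Z) ≤ δ := hmax _ hlC
    have hdD : d (X ++ wD c m Z) ≤ δ := hmax _ hlD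
    have : δ < δ := by
      calc δ = d w₀ := hw₀δ.symm
        _ ≤ _ := hcombo
        _ < (1/2) * δ + (1/3) * δ + (1/6) * δ := by
            have hnn : 0 ≤ d (X ++ wB c m Z) := Metric.infDist_nonneg
            nlinarith
        _ = δ := by ring
    exact lt_irrefl δ this
  -- hence w₀ is a family word, δ = 0, and everything is in C
  have hδ0 : δ = 0 := by
    rcases rep w₀ with hb | ⟨c, aa, ss, rr, hoeq⟩
    · exact absurd hb hnotbad
    · have : pt a₀ w₀ ∈ F := ⟨w₀, ⟨hw₀T.1, c, aa, ss, rr, hoeq⟩, rfl⟩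
      have : d w₀ = 0 := Metric.infDist_zero_of_mem ((subset_convexHull ℝ F) this)
      rw [← hw₀T.2, this]
  intro w hw
  have : d w ≤ 0 := hδ0 ▸ hmax w hw
  have hdw : d w = 0 := le_antisymm this Metric.infDist_nonneg
  exact (hCcl.mem_iff_infDist_zero hCne).2 hdw

end Delta


section Glue

variable (a₀ : Fin 2 → ℝ)

lemma M2_mem : M2 ∈ ({M2, M3} : Set (Matrix (Fin 2) (Fin 2) ℝ)) := by simp
lemma M3_mem : M3 ∈ ({M2, M3} : Set (Matrix (Fin 2) (Fin 2) ℝ)) := by simp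

/-- Realization of the orbit set via words. -/
lemma xseq_words (k : ℕ) :
    XSeq {M2, M3} a₀ k = pt a₀ '' {w : List Bool | w.length = k} := by
  induction k with
  | zero =>
    ext v
    simp only [XSeq, Set.mem_singleton_iff, Set.mem_image, Set.mem_setOf_eq]
    constructor
    · rintro rfl
      exact ⟨[], rfl, by simp [pt, mat_nil, Matrix.one_mulVec]⟩
    · rintro ⟨w, hw, rfl⟩
      have hwnil : w = [] := List.length_eq_zero_iff.mp hw
      subst hwnil
      simp [pt, mat_nil, Matrix.one_mulVec]
  | succ k ih =>
    ext v
    simp only [XSeq, ih]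
    constructor
    · rintro hv
      simp only [Set.biUnion_pair, Set.mem_union, Set.mem_image] at hv
      rcases hv with ⟨u, ⟨w, hw, rfl⟩, rfl⟩ | ⟨u, ⟨w, hw, rfl⟩, rfl⟩
      · exact ⟨false :: w, by simpa using hw, by
          simp [pt, mat_cons, Mg, ← Matrix.mulVec_mulVec]⟩
      · exact ⟨true :: w, by simpa using hw, by
          simp [pt, mat_cons, Mg, ← Matrix.mulVec_mulVec]⟩
    · rintro ⟨w, hw, rfl⟩
      match w, hw with
      | x :: w, hw =>
        simp only [Set.biUnion_pair, Set.mem_union, Set.mem_image]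
        have hw' : w ∈ {w : List Bool | w.length = k} := by simpa using hw
        cases x
        · left
          exact ⟨pt a₀ w, ⟨w, hw', rfl⟩, by simp [pt, mat_cons, Mg, ← Matrix.mulVec_mulVec]⟩
        · right
          exact ⟨pt a₀ w, ⟨w, hw', rfl⟩, by simp [pt, mat_cons, Mg, ← Matrix.mulVec_mulVec]⟩

lemma xseq_two_step (S : Set (Matrix (Fin 2) (Fin 2) ℝ)) (k : ℕ) :
    XSeq S a₀ (k + 2) = ⋃ A ∈ S, ⋃ B ∈ S, (A * B).mulVec '' XSeq S a₀ k := by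
  show (⋃ A ∈ S, A.mulVec '' (⋃ B ∈ S, B.mulVec '' XSeq S a₀ k)) = _
  have h1 : ∀ A : Matrix (Fin 2) (Fin 2) ℝ,
      A.mulVec '' (⋃ B ∈ S, B.mulVec '' XSeq S a₀ k)
        = ⋃ B ∈ S, (A * B).mulVec '' XSeq S a₀ k := by
    intro A
    rw [Set.image_iUnion₂]
    refine Set.iUnion₂_congr fun B _ => ?_
    rw [← Set.image_comp]
    refine Set.image_congr fun z _ => ?_
    exact Matrix.mulVec_mulVec z A B
  exact Set.iUnion₂_congr fun A _ => h1 A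

lemma prod_44 : M4 * M4 = M2 * M3 := by
  simp [M2, M3, M4, Matrix.mul_fin_two]
lemma prod_45 : M4 * M5 = M2 * M2 := by
  simp [M2, M4, M5, Matrix.mul_fin_two]
lemma prod_54 : M5 * M4 = M3 * M3 := by
  simp [M3, M4, M5, Matrix.mul_fin_two]
lemma prod_55 : M5 * M5 = M3 * M2 := by
  simp [M2, M3, M5, Matrix.mul_fin_two]
lemma prod_13 : M1 * M3 = M4 := by
  simp [M1, M3, M4, Matrix.mul_fin_two]
lemma prod_12 : M1 * M2 = M5 := by
  simp [M1, M2, M5, Matrix.mul_fin_two]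

/-- On even steps, the Σ₄ orbit coincides with the Σ₃ orbit. -/
lemma xseq_even (n : ℕ) : XSeq {M4, M5} a₀ (2 * n) = XSeq {M2, M3} a₀ (2 * n) := by
  induction n with
  | zero => rfl
  | succ n ih =>
    have h1 : 2 * (n + 1) = 2 * n + 2 := by ring
    rw [h1, xseq_two_step, xseq_two_step, ih]
    simp only [Set.biUnion_pair]
    rw [prod_44, prod_45, prod_54, prod_55]
    ext v
    simp only [Set.mem_union]
    tauto

/-- On odd steps, the Σ₄ orbit is the `M1`-image of the Σ₃ orbit. -/
lemma xseq_odd (n : ℕ) :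
    XSeq {M4, M5} a₀ (2 * n + 1) = M1.mulVec '' XSeq {M2, M3} a₀ (2 * n + 1) := by
  show (⋃ A ∈ ({M4, M5} : Set _), A.mulVec '' XSeq {M4, M5} a₀ (2*n)) = _
  rw [xseq_even]
  show _ = M1.mulVec '' (⋃ A ∈ ({M2, M3} : Set _), A.mulVec '' XSeq {M2, M3} a₀ (2*n))
  ext v
  simp only [Set.biUnion_pair, Set.mem_union, Set.mem_image, Set.image_union]
  constructor
  · rintro (⟨z, hz, rfl⟩ | ⟨z, hz, rfl⟩)
    · -- M4 = M1 * M3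
      refine Or.inr ⟨M3.mulVec z, ⟨z, hz, rfl⟩, ?_⟩
      rw [Matrix.mulVec_mulVec, prod_13]
    · refine Or.inl ⟨M2.mulVec z, ⟨z, hz, rfl⟩, ?_⟩
      rw [Matrix.mulVec_mulVec, prod_12]
  · rintro (⟨u, ⟨z, hz, rfl⟩, rfl⟩ | ⟨u, ⟨z, hz, rfl⟩, rfl⟩)
    · exact Or.inr ⟨z, hz, by rw [Matrix.mulVec_mulVec, prod_12]⟩
    · exact Or.inl ⟨z, hz, by rw [Matrix.mulVec_mulVec, prod_13]⟩

end Glue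

section Count

variable (a₀ : Fin 2 → ℝ)

/-- If the orbit is a linear image of the word realization, then the extreme points
come from family words. -/
lemma epts_sub (k : ℕ) (L : Matrix (Fin 2) (Fin 2) ℝ)
    (hX : XSeq {M4, M5} a₀ k = L.mulVec '' (pt a₀ '' {w : List Bool | w.length = k})) :
    EPts {M4, M5} a₀ k ⊆ (fun w => L.mulVec (pt a₀ w)) '' FamS k := by
  set g : List Bool → (Fin 2 → ℝ) := fun w => L.mulVec (pt a₀ w) with hg
  have key : PHull {M4, M5} a₀ k = convexHull ℝ (g '' FamS k) := by
    apply le_antisymm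
    · -- X₄ ⊆ convexHull (g '' FamS k)
      refine convexHull_min ?_ (convex_convexHull ℝ _)
      rw [hX]
      rintro _ ⟨u, ⟨w, hw, rfl⟩, rfl⟩
      have h1 : pt a₀ w ∈ convexHull ℝ (pt a₀ '' FamS k) := main_hull k a₀ w hw
      have h2 : L.mulVec (pt a₀ w) ∈
          (Matrix.mulVecLin L) '' (convexHull ℝ (pt a₀ '' FamS k)) :=
        ⟨pt a₀ w, h1, by simp [Matrix.mulVecLin_apply]⟩
      rw [LinearMap.image_convexHull] at h2
      have h3 : (Matrix.mulVecLin L) '' (pt a₀ '' FamS k) = g '' FamS k := by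
        rw [← Set.image_comp]
        refine Set.image_congr fun w _ => ?_
        simp [Matrix.mulVecLin_apply, hg]
      rwa [h3] at h2
    · refine convexHull_mono ?_
      rw [hX]
      rintro _ ⟨w, hw, rfl⟩
      exact ⟨pt a₀ w, ⟨w, hw.1, rfl⟩, rfl⟩
  rw [EPts, key]
  exact extremePoints_convexHull_subset

lemma famS_param (k : ℕ) :
    FamS k ⊆ (fun p : Bool × ℕ × ℕ => fW p.1 p.2.1 p.2.2 (k - p.2.1 - p.2.2)) ''
      ↑((Finset.univ : Finset Bool) ×ˢ Finset.Iic k ×ˢ Finset.Iic k) := by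
  rintro w ⟨hlen, c, a, s, r, rfl⟩
  rw [len_fW] at hlen
  refine ⟨(c, a, s), ?_, ?_⟩
  · simp [Finset.mem_Iic]
    omega
  · simp only
    congr 1
    omega

lemma next_le (k : ℕ) (L : Matrix (Fin 2) (Fin 2) ℝ)
    (hX : XSeq {M4, M5} a₀ k = L.mulVec '' (pt a₀ '' {w : List Bool | w.length = k})) :
    NExt {M4, M5} a₀ k ≤ 2 * (k + 1) * (k + 1) := by
  classical
  set P : Finset (Bool × ℕ × ℕ) :=
    (Finset.univ : Finset Bool) ×ˢ Finset.Iic k ×ˢ Finset.Iic k with hP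
  set g : List Bool → (Fin 2 → ℝ) := fun w => L.mulVec (pt a₀ w) with hg
  have hsub : EPts {M4, M5} a₀ k ⊆
      ↑(P.image (fun p : Bool × ℕ × ℕ => g (fW p.1 p.2.1 p.2.2 (k - p.2.1 - p.2.2)))) := by
    intro x hx
    obtain ⟨w, hw, rfl⟩ := epts_sub a₀ k L hX hx
    obtain ⟨p, hp, rfl⟩ := famS_param k hw
    simp only [Finset.coe_image, Set.mem_image, Finset.mem_coe]
    exact ⟨p, by exact_mod_cast hp, rfl⟩
  calc NExt {M4, M5} a₀ k
      ≤ (P.image (fun p : Bool × ℕ × ℕ =>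
          g (fW p.1 p.2.1 p.2.2 (k - p.2.1 - p.2.2)))).card := by
        rw [NExt, ← Set.ncard_coe_finset]
        exact Set.ncard_le_ncard hsub (Set.Finite.ofFinset _ (fun x => Iff.rfl))
    _ ≤ P.card := Finset.card_image_le
    _ = 2 * (k + 1) * (k + 1) := by
        simp [hP, Nat.card_Iic]
        ring

lemma hX_even (n : ℕ) :
    XSeq {M4, M5} a₀ (2 * n) =
      (1 : Matrix (Fin 2) (Fin 2) ℝ).mulVec ''
        (pt a₀ '' {w : List Bool | w.length = 2 * n}) := by
  rw [xseq_even, xseq_words]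
  have : ∀ x ∈ pt a₀ '' {w : List Bool | w.length = 2 * n},
      (1 : Matrix (Fin 2) (Fin 2) ℝ).mulVec x = x := fun x _ => Matrix.one_mulVec x
  rw [Set.image_congr this, Set.image_id']

lemma hX_odd (n : ℕ) :
    XSeq {M4, M5} a₀ (2 * n + 1) =
      M1.mulVec '' (pt a₀ '' {w : List Bool | w.length = 2 * n + 1}) := by
  rw [xseq_odd, xseq_words]

end Count

end Stmt18

/-- `N_k(Σ₄, a) = O(k²)` uniformly in `a`, where `Σ₄ = {A₄, A₅}`; moreover
`P_k(Σ₄, a) = P_k(Σ₃, a)` for every even `k`, where `Σ₃ = {A₂, A₃}`. -/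
theorem stmt18 :
    (∃ α : ℝ, 0 < α ∧ ∃ k₀ : ℕ, ∀ a : Fin 2 → ℝ, ∀ k : ℕ, k₀ ≤ k →
      (NExt {M4, M5} a k : ℝ) ≤ α * (k : ℝ) ^ 2) ∧
    (∀ k : ℕ, Even k → ∀ a : Fin 2 → ℝ, PHull {M4, M5} a k = PHull {M2, M3} a k) := by
  constructor
  · refine ⟨8, by norm_num, 1, ?_⟩
    intro a k hk
    have hcount : NExt {M4, M5} a k ≤ 2 * (k + 1) * (k + 1) := by
      rcases Nat.even_or_odd k with ⟨n, rfl⟩ | ⟨n, rfl⟩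
      · have h2n : n + n = 2 * n := by ring
        rw [h2n]
        exact Stmt18.next_le a (2 * n) 1 (Stmt18.hX_even a n)
      · exact Stmt18.next_le a (2 * n + 1) M1 (Stmt18.hX_odd a n)
    have hkk : 2 * (k + 1) * (k + 1) ≤ 8 * (k * k) := by nlinarith
    calc (NExt {M4, M5} a k : ℝ)
        ≤ ((2 * (k + 1) * (k + 1) : ℕ) : ℝ) := by exact_mod_cast hcount
      _ ≤ ((8 * (k * k) : ℕ) : ℝ) := by exact_mod_cast hkk
      _ = 8 * (k : ℝ) ^ 2 := by push_cast; ring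
  · intro k hk a
    obtain ⟨n, rfl⟩ := hk
    have h2n : n + n = 2 * n := by ring
    rw [PHull, PHull, h2n, Stmt18.xseq_even]

end
end

section
/- For every a ∈ ℝ² in the closed first quadrant with a₁ ≥ a₂ (i.e., a₁ ≥ a₂ ≥ 0) and every integer k ≥ 1, N_k(Σ₅, a) ≤ 6k + 8, where Σ₅ = {A₂, A₄}. -/
open Matrix Set

noncomputable section

lemma m2_0 (v : Fin 2 → ℝ) : M2.mulVec v 0 = v 0 + v 1 := by
  simp [M2, Matrix.mulVec, dotProduct, Fin.sum_univ_two]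
lemma m2_1 (v : Fin 2 → ℝ) : M2.mulVec v 1 = v 1 := by
  simp [M2, Matrix.mulVec, dotProduct, Fin.sum_univ_two]
lemma m4_0 (v : Fin 2 → ℝ) : M4.mulVec v 0 = v 0 + v 1 := by
  simp [M4, Matrix.mulVec, dotProduct, Fin.sum_univ_two]
lemma m4_1 (v : Fin 2 → ℝ) : M4.mulVec v 1 = v 0 := by
  simp [M4, Matrix.mulVec, dotProduct, Fin.sum_univ_two]
lemma m2pow_1 (b : ℕ) (v : Fin 2 → ℝ) : (M2^b).mulVec v 1 = v 1 := by
  induction b with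
  | zero => simp
  | succ n ih => rw [pow_succ', ← Matrix.mulVec_mulVec, m2_1, ih]
lemma m2pow_0 (b : ℕ) (v : Fin 2 → ℝ) : (M2^b).mulVec v 0 = v 0 + b * v 1 := by
  induction b with
  | zero => simp
  | succ n ih =>
    rw [pow_succ', ← Matrix.mulVec_mulVec, m2_0, ih, m2pow_1]
    push_cast; ring

lemma vpair_eq {x y : ℝ} {v : Fin 2 → ℝ} (h0 : v 0 = x) (h1 : v 1 = y) : v = ![x, y] := by
  funext i; fin_cases i <;> simpa

/-- Good point set: words `g^α f^β` and `g^α f^β g` of total length `k`. -/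
def G (a : Fin 2 → ℝ) (k : ℕ) : Set (Fin 2 → ℝ) :=
  {x | ∃ α β : ℕ, α + β = k ∧ x = (M2 ^ β * M4 ^ α).mulVec a} ∪
  {x | ∃ α β : ℕ, α + β + 1 = k ∧ x = (M4 * (M2 ^ β * M4 ^ α)).mulVec a}

lemma cone_pow (a : Fin 2 → ℝ) (h0 : 0 ≤ a 1) (h1 : a 1 ≤ a 0) (α : ℕ) :
    0 ≤ ((M4 ^ α).mulVec a) 1 ∧ ((M4 ^ α).mulVec a) 1 ≤ ((M4 ^ α).mulVec a) 0 := by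
  induction α with
  | zero => simpa using ⟨h0, h1⟩
  | succ n ih =>
    rw [pow_succ', ← Matrix.mulVec_mulVec, m4_0, m4_1]
    constructor <;> linarith [ih.1, ih.2]
lemma rect {X1 X2 Ya Yb Ye Yd x y : ℝ}
    (hab : Ya ≤ Yb) (hed : Ye ≤ Yd) (h1 : X1 ≤ x) (h2 : x ≤ X2)
    (hya : Ya ≤ y) (hyb : y ≤ Yb) (hye : Ye ≤ y) (hyd : y ≤ Yd)
    {S : Set (Fin 2 → ℝ)} (hA : ![X1, Ya] ∈ S) (hB : ![X1, Yb] ∈ S)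
    (hE : ![X2, Ye] ∈ S) (hD : ![X2, Yd] ∈ S) :
    ![x, y] ∈ convexHull ℝ S := by
  have hC : Convex ℝ (convexHull ℝ S) := convex_convexHull ℝ S
  have hQ1 : ![X1, y] ∈ convexHull ℝ S := by
    have hy : y ∈ segment ℝ Ya Yb := by rw [segment_eq_Icc hab]; exact ⟨hya, hyb⟩
    obtain ⟨c, d, hc, hd, hcd, h⟩ := hy
    simp only [smul_eq_mul] at h
    have he : ![X1, y] = c • ![X1, Ya] + d • ![X1, Yb] := by
      funext i; fin_cases i <;>
        simp only [Pi.add_apply, Pi.smul_apply, Matrix.cons_val_zero, Matrix.cons_val_one,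
          Matrix.head_cons, smul_eq_mul, Fin.mk_one, Fin.zero_eta, Fin.isValue]
      · linear_combination (-X1) * hcd
      · linear_combination -h
    rw [he]
    exact hC (subset_convexHull ℝ S hA) (subset_convexHull ℝ S hB) hc hd hcd
  have hQ2 : ![X2, y] ∈ convexHull ℝ S := by
    have hy : y ∈ segment ℝ Ye Yd := by rw [segment_eq_Icc hed]; exact ⟨hye, hyd⟩
    obtain ⟨c, d, hc, hd, hcd, h⟩ := hy
    simp only [smul_eq_mul] at h
    have he : ![X2, y] = c • ![X2, Ye] + d • ![X2, Yd] := by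
      funext i; fin_cases i <;>
        simp only [Pi.add_apply, Pi.smul_apply, Matrix.cons_val_zero, Matrix.cons_val_one,
          Matrix.head_cons, smul_eq_mul, Fin.mk_one, Fin.zero_eta, Fin.isValue]
      · linear_combination (-X2) * hcd
      · linear_combination -h
    rw [he]
    exact hC (subset_convexHull ℝ S hE) (subset_convexHull ℝ S hD) hc hd hcd
  have hx : x ∈ segment ℝ X1 X2 := by rw [segment_eq_Icc (h1.trans h2)]; exact ⟨h1, h2⟩
  obtain ⟨c, d, hc, hd, hcd, h⟩ := hx
  simp only [smul_eq_mul] at h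
  have he : ![x, y] = c • ![X1, y] + d • ![X2, y] := by
    funext i; fin_cases i <;>
      simp only [Pi.add_apply, Pi.smul_apply, Matrix.cons_val_zero, Matrix.cons_val_one,
        Matrix.head_cons, smul_eq_mul, Fin.mk_one, Fin.zero_eta, Fin.isValue]
    · linear_combination -h
    · linear_combination (-y) * hcd
  rw [he]; exact hC hQ1 hQ2 hc hd hcd


lemma key (a u : Fin 2 → ℝ) (α : ℕ) (hu : u = (M4 ^ α).mulVec a)
    (hq : 0 ≤ u 1) (hpq : u 1 ≤ u 0) (β : ℕ) (hβ : 1 ≤ β) (t : Fin 2 → ℝ)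
    (ht : t = M2.mulVec ((M4 * (M2 ^ β * M4 ^ α)).mulVec a) ∨
          t = M4.mulVec ((M4 * (M2 ^ β * M4 ^ α)).mulVec a)) :
    t ∈ convexHull ℝ (G a (α + β + 2)) := by
  obtain ⟨β', rfl⟩ : ∃ β', β = β' + 1 := ⟨β - 1, by omega⟩
  clear hβ
  set p := u 0 with hp
  set q := u 1 with hq2
  set B : ℝ := ((β' : ℝ) + 1) with hBdef
  have hB1 : (1:ℝ) ≤ B := by
    rw [hBdef]; linarith [Nat.cast_nonneg (α := ℝ) β']
  have hq0 : 0 ≤ p := le_trans hq hpq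
  have hz : (M4 * (M2 ^ (β' + 1) * M4 ^ α)).mulVec a = M4.mulVec ((M2 ^ (β' + 1)).mulVec u) := by
    rw [hu, Matrix.mulVec_mulVec, Matrix.mulVec_mulVec, mul_assoc]
  have e42 : M4 ^ (α + 2) = M4 * (M4 * M4 ^ α) := by rw [pow_succ', pow_succ']
  have h42 : (M4 ^ (α + 2)).mulVec a = M4.mulVec (M4.mulVec u) := by
    rw [hu, e42, ← Matrix.mulVec_mulVec, ← Matrix.mulVec_mulVec]
  have hA : ![p + (B + 2) * q, q] ∈ G a (α + (β' + 1) + 2) := by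
    left
    refine ⟨α, β' + 3, by omega, ?_⟩
    rw [← Matrix.mulVec_mulVec, ← hu]
    refine (vpair_eq ?_ ?_).symm
    · simp only [m2_0, m2_1, m4_0, m4_1, m2pow_0, m2pow_1]; rw [hBdef]; push_cast; ring
    · simp only [m2_0, m2_1, m4_0, m4_1, m2pow_0, m2pow_1]; rfl
  have hBm : ![p + (B + 2) * q, p + (B + 1) * q] ∈ G a (α + (β' + 1) + 2) := by
    right
    refine ⟨α, β' + 2, by omega, ?_⟩
    rw [← Matrix.mulVec_mulVec, ← Matrix.mulVec_mulVec, ← hu]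
    refine (vpair_eq ?_ ?_).symm
    · simp only [m2_0, m2_1, m4_0, m4_1, m2pow_0, m2pow_1]; rw [hBdef]; push_cast; ring
    · simp only [m2_0, m2_1, m4_0, m4_1, m2pow_0, m2pow_1]; rw [hBdef]; push_cast; ring
  have hE : ![(B + 2) * p + (B + 1) * q, p + q] ∈ G a (α + (β' + 1) + 2) := by
    left
    refine ⟨α + 2, β' + 1, by omega, ?_⟩
    rw [← Matrix.mulVec_mulVec, h42]
    refine (vpair_eq ?_ ?_).symm
    · simp only [m2_0, m2_1, m4_0, m4_1, m2pow_0, m2pow_1]; rw [hBdef]; push_cast; ring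
    · simp only [m2_0, m2_1, m4_0, m4_1, m2pow_0, m2pow_1]; rfl
  have hD : ![(B + 2) * p + (B + 1) * q, (B + 1) * p + B * q] ∈ G a (α + (β' + 1) + 2) := by
    right
    refine ⟨α + 2, β', by omega, ?_⟩
    rw [← Matrix.mulVec_mulVec, ← Matrix.mulVec_mulVec, h42]
    refine (vpair_eq ?_ ?_).symm
    · simp only [m2_0, m2_1, m4_0, m4_1, m2pow_0, m2pow_1]; rw [hBdef]; push_cast; ring
    · simp only [m2_0, m2_1, m4_0, m4_1, m2pow_0, m2pow_1]; rw [hBdef]; push_cast; ring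
  have ht' : t = ![2 * p + (2 * B + 1) * q, p + B * q] ∨
      t = ![2 * p + (2 * B + 1) * q, p + (B + 1) * q] := by
    rcases ht with rfl | rfl
    · left
      rw [hz]
      refine vpair_eq ?_ ?_
      · simp only [m2_0, m2_1, m4_0, m4_1, m2pow_0, m2pow_1]; rw [hBdef]; push_cast; ring
      · simp only [m2_0, m2_1, m4_0, m4_1, m2pow_0, m2pow_1]; rw [hBdef]; push_cast; ring
    · right
      rw [hz]
      refine vpair_eq ?_ ?_
      · simp only [m2_0, m2_1, m4_0, m4_1, m2pow_0, m2pow_1]; rw [hBdef]; push_cast; ring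
      · simp only [m2_0, m2_1, m4_0, m4_1, m2pow_0, m2pow_1]; rw [hBdef]; push_cast; ring
  have key4 : ∀ Y : ℝ, Y = p + B * q ∨ Y = p + (B + 1) * q →
      ![2 * p + (2 * B + 1) * q, Y] ∈ convexHull ℝ (G a (α + (β' + 1) + 2)) := by
    intro Y hY
    refine rect (Ya := q) (Yb := p + (B + 1) * q) (Ye := p + q) (Yd := (B + 1) * p + B * q)
      ?_ ?_ ?_ ?_ ?_ ?_ ?_ ?_ hA hBm hE hD
    · nlinarith
    · nlinarith
    · nlinarith
    · nlinarith
    · rcases hY with rfl | rfl <;> nlinarith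
    · rcases hY with rfl | rfl <;> nlinarith
    · rcases hY with rfl | rfl <;> nlinarith
    · rcases hY with rfl | rfl <;> nlinarith
  rcases ht' with h | h
  · rw [h]; exact key4 _ (Or.inl rfl)
  · rw [h]; exact key4 _ (Or.inr rfl)

lemma step (a : Fin 2 → ℝ) (ha0 : 0 ≤ a 1) (ha1 : a 1 ≤ a 0) (k : ℕ)
    (A : Matrix (Fin 2) (Fin 2) ℝ) (hA : A ∈ ({M2, M4} : Set (Matrix (Fin 2) (Fin 2) ℝ)))
    (z : Fin 2 → ℝ) (hz : z ∈ G a k) :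
    A.mulVec z ∈ convexHull ℝ (G a (k + 1)) := by
  simp only [Set.mem_insert_iff, Set.mem_singleton_iff] at hA
  rcases hz with ⟨α, β, hk, rfl⟩ | ⟨α, β, hk, rfl⟩
  · rcases hA with rfl | rfl
    · apply subset_convexHull
      left
      exact ⟨α, β + 1, by omega, by rw [Matrix.mulVec_mulVec, ← mul_assoc, ← pow_succ']⟩
    · apply subset_convexHull
      right
      exact ⟨α, β, by omega, by rw [Matrix.mulVec_mulVec]⟩
  · have hc := cone_pow a ha0 ha1 α
    rcases Nat.eq_zero_or_pos β with rfl | hβ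
    · rcases hA with rfl | rfl
      · apply subset_convexHull
        left
        refine ⟨α + 1, 1, by omega, ?_⟩
        rw [Matrix.mulVec_mulVec]
        congr 1
        rw [pow_zero, one_mul, pow_one, pow_succ']
      · apply subset_convexHull
        left
        refine ⟨α + 2, 0, by omega, ?_⟩
        rw [Matrix.mulVec_mulVec]
        congr 1
        rw [pow_zero, one_mul, one_mul, pow_succ', pow_succ']
    · have hk2 : k + 1 = α + β + 2 := by omega
      rw [hk2]
      rcases hA with rfl | rfl
      · exact key a _ α rfl hc.1 hc.2 β hβ _ (Or.inl rfl)
      · exact key a _ α rfl hc.1 hc.2 β hβ _ (Or.inr rfl)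

lemma xseq_sub (a : Fin 2 → ℝ) (ha0 : 0 ≤ a 1) (ha1 : a 1 ≤ a 0) :
    ∀ k, XSeq {M2, M4} a k ⊆ convexHull ℝ (G a k) := by
  intro k
  induction k with
  | zero =>
    intro x hx
    rw [show x = a from hx]
    apply subset_convexHull
    left
    exact ⟨0, 0, rfl, by simp⟩
  | succ k ih =>
    intro x hx
    obtain ⟨A, hA, y, hy, rfl⟩ :
        ∃ A ∈ ({M2, M4} : Set (Matrix (Fin 2) (Fin 2) ℝ)),
          ∃ y ∈ XSeq {M2, M4} a k, A.mulVec y = x := by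
      simpa [XSeq] using hx
    have hy' : y ∈ convexHull ℝ (G a k) := ih hy
    have himg : A.mulVec y ∈ A.mulVecLin '' convexHull ℝ (G a k) :=
      ⟨y, hy', by simp [Matrix.mulVecLin_apply]⟩
    rw [A.mulVecLin.image_convexHull] at himg
    refine convexHull_min ?_ (convex_convexHull ℝ (G a (k + 1))) himg
    rintro w ⟨zz, hzz, rfl⟩
    simpa [Matrix.mulVecLin_apply] using step a ha0 ha1 k A hA zz hzz

lemma mem_xseq_step {S : Set (Matrix (Fin 2) (Fin 2) ℝ)} {a : Fin 2 → ℝ} {k : ℕ}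
    {A : Matrix (Fin 2) (Fin 2) ℝ} {x : Fin 2 → ℝ} (hA : A ∈ S) (hx : x ∈ XSeq S a k) :
    A.mulVec x ∈ XSeq S a (k + 1) := by
  simp only [XSeq]
  exact Set.mem_biUnion hA ⟨x, hx, rfl⟩

lemma mem_xseq_pow {S : Set (Matrix (Fin 2) (Fin 2) ℝ)} {a : Fin 2 → ℝ}
    {A : Matrix (Fin 2) (Fin 2) ℝ} (hA : A ∈ S) :
    ∀ (n k : ℕ) (x : Fin 2 → ℝ), x ∈ XSeq S a k → (A ^ n).mulVec x ∈ XSeq S a (k + n) := by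
  intro n
  induction n with
  | zero => intro k x hx; simpa using hx
  | succ n ih =>
    intro k x hx
    rw [pow_succ', ← Matrix.mulVec_mulVec, show k + (n + 1) = (k + n) + 1 from rfl]
    exact mem_xseq_step hA (ih k x hx)

lemma G_sub (a : Fin 2 → ℝ) (k : ℕ) : G a k ⊆ XSeq {M2, M4} a k := by
  have hM2 : M2 ∈ ({M2, M4} : Set (Matrix (Fin 2) (Fin 2) ℝ)) := Set.mem_insert _ _
  have hM4 : M4 ∈ ({M2, M4} : Set (Matrix (Fin 2) (Fin 2) ℝ)) :=
    Set.mem_insert_of_mem _ rfl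
  have ha : a ∈ XSeq {M2, M4} a 0 := rfl
  rintro x (⟨α, β, hk, rfl⟩ | ⟨α, β, hk, rfl⟩)
  · rw [← Matrix.mulVec_mulVec]
    have h1 := mem_xseq_pow hM4 α 0 a ha
    rw [zero_add] at h1
    have h2 := mem_xseq_pow hM2 β α _ h1
    rw [← hk]
    exact h2
  · rw [← Matrix.mulVec_mulVec, ← Matrix.mulVec_mulVec]
    have h1 := mem_xseq_pow hM4 α 0 a ha
    rw [zero_add] at h1
    have h2 := mem_xseq_pow hM2 β α _ h1
    have h3 := mem_xseq_step hM4 h2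
    rw [← hk]
    exact h3

lemma G_sub_imgs (a : Fin 2 → ℝ) (k : ℕ) :
    G a k ⊆ ((fun α : ℕ => (M2 ^ (k - α) * M4 ^ α).mulVec a) '' ↑(Finset.Iic k)) ∪
      ((fun α : ℕ => (M4 * (M2 ^ (k - 1 - α) * M4 ^ α)).mulVec a) '' ↑(Finset.Iic k)) := by
  rintro x (⟨α, β, hk, rfl⟩ | ⟨α, β, hk, rfl⟩)
  · left
    refine ⟨α, by simp [Finset.mem_Iic]; omega, ?_⟩
    have h : k - α = β := by omega
    beta_reduce
    rw [h]
  · right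
    refine ⟨α, by simp [Finset.mem_Iic]; omega, ?_⟩
    have h : k - 1 - α = β := by omega
    beta_reduce
    rw [h]

lemma G_finite (a : Fin 2 → ℝ) (k : ℕ) : (G a k).Finite :=
  Set.Finite.subset (Set.Finite.union
    ((Finset.Iic k).finite_toSet.image _) ((Finset.Iic k).finite_toSet.image _))
    (G_sub_imgs a k)

lemma G_card (a : Fin 2 → ℝ) (k : ℕ) : (G a k).ncard ≤ 2 * k + 2 := by
  have h1 := Set.ncard_le_ncard (G_sub_imgs a k)
    (Set.Finite.union ((Finset.Iic k).finite_toSet.image _)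
      ((Finset.Iic k).finite_toSet.image _))
  have h2 := Set.ncard_union_le
    ((fun α : ℕ => (M2 ^ (k - α) * M4 ^ α).mulVec a) '' ↑(Finset.Iic k))
    ((fun α : ℕ => (M4 * (M2 ^ (k - 1 - α) * M4 ^ α)).mulVec a) '' ↑(Finset.Iic k))
  have h3 := Set.ncard_image_le (f := fun α : ℕ => (M2 ^ (k - α) * M4 ^ α).mulVec a)
    (Finset.Iic k).finite_toSet
  have h4 := Set.ncard_image_le (f := fun α : ℕ => (M4 * (M2 ^ (k - 1 - α) * M4 ^ α)).mulVec a)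
    (Finset.Iic k).finite_toSet
  have h5 : (↑(Finset.Iic k) : Set ℕ).ncard = k + 1 := by
    rw [Set.ncard_coe_finset, Nat.card_Iic]
  omega


/-- `N_k(Σ₅, a) ≤ 6k + 8` for `a` in the closed first quadrant with `a 0 ≥ a 1` and `k ≥ 1`,
where `Σ₅ = {A₂, A₄}`. -/
theorem stmt19 (a : Fin 2 → ℝ) (ha : 0 ≤ a 1 ∧ a 1 ≤ a 0) (k : ℕ) (hk : 1 ≤ k) :
    NExt {M2, M4} a k ≤ 6 * k + 8 := by
  obtain ⟨ha0, ha1⟩ := ha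
  have hhull : PHull {M2, M4} a k = convexHull ℝ (G a k) := by
    apply le_antisymm
    · exact convexHull_min (xseq_sub a ha0 ha1 k) (convex_convexHull ℝ _)
    · exact convexHull_mono (G_sub a k)
  have hEsub : EPts {M2, M4} a k ⊆ G a k := by
    rw [EPts, hhull]
    exact extremePoints_convexHull_subset
  have h1 : NExt {M2, M4} a k ≤ (G a k).ncard :=
    Set.ncard_le_ncard hEsub (G_finite a k)
  have h2 := G_card a k
  omega

end
end
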